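/- Let d ≥ 1, p, q ∈ (0,∞] and r₂ ∈ (0,q]. For a measurable function F: ℝ^d × ℝ^d → ℂ define ψ(x) = ‖F(x,·)‖_{L^q(ℝ^d)}, and for s ∈ (0,∞] define H_s(j,ι) = ‖x ↦ ‖F(x,·)‖_{L^q(ι+[0,2π]^d)}‖_{L^s(j+[0,1]^d)} for j ∈ ℤ^d, ι ∈ 2πℤ^d. Then there exist constants C₁, C₂ > 0, independent of F, such that ‖(‖(H_{r₂}(j,ι))_{ι∈2πℤ^d}‖_{ℓ^q})_{j∈ℤ^d}‖_{ℓ^p} ≤ C₁·‖(‖ψ‖_{L^{r₂}(j+[0,1]^d)})_{j∈ℤ^d}‖_{ℓ^p} and ‖(‖ψ‖_{L^{r₂}(j+[0,1]^d)})_{j∈ℤ^d}‖_{ℓ^p} ≤ C₂·‖(‖(H_∞(j,ι))_{ι∈2πℤ^d}‖_{ℓ^q})_{j∈ℤ^d}‖_{ℓ^p}; all quantities may be +∞. -/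

import Mathlib

open MeasureTheory Complex Real
open scoped InnerProductSpace ENNReal

noncomputable section

/-- `ℝ^d` as a Euclidean space. -/
abbrev Ed (d : ℕ) := EuclideanSpace ℝ (Fin d)

/-- The unit cell `j + [0,1]^d ⊆ ℝ^d`. -/
def cell (d : ℕ) (j : Fin d → ℤ) : Set (Ed d) :=
  {x | ∀ i, x i ∈ Set.Icc (j i : ℝ) (j i + 1)}

/-- The cell `2πι + [0,2π]^d ⊆ ℝ^d`, `ι ∈ ℤ^d`. -/
def cell2pi (d : ℕ) (ι : Fin d → ℤ) : Set (Ed d) :=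
  {x | ∀ i, x i ∈ Set.Icc (2*π*(ι i)) (2*π*(ι i) + 2*π)}

/-- The `ℓ^p` quasi-norm of an `ℝ≥0∞`-valued sequence, `p ∈ (0,∞]`. -/
def lpSeq {ι : Type*} (p : ℝ≥0∞) (a : ι → ℝ≥0∞) : ℝ≥0∞ :=
  if p = ∞ then ⨆ j, a j else (∑' j, a j ^ p.toReal) ^ (1 / p.toReal)

/-- The `L^p` quasi-norm of an `ℝ≥0∞`-valued function, `p ∈ (0,∞]`. -/
def lpENN {α : Type*} [MeasurableSpace α] (p : ℝ≥0∞) (μ : Measure α) (g : α → ℝ≥0∞) : ℝ≥0∞ :=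
  if p = ∞ then essSup g μ else (∫⁻ x, g x ^ p.toReal ∂μ) ^ (1 / p.toReal)

/-- The quantity `H_s(j,ι) = ‖x ↦ ‖F(x,·)‖_{L^q(ι+[0,2π]^d)}‖_{L^s(j+[0,1]^d)}`. -/
def Hq (d : ℕ) (q s : ℝ≥0∞) (F : Ed d × Ed d → ℂ) (j ι : Fin d → ℤ) : ℝ≥0∞ :=
  lpENN s (volume.restrict (cell d j))
    (fun x => eLpNorm (fun t => F (x, t)) q (volume.restrict (cell2pi d ι)))

lemma measurable_eval (d : ℕ) (i : Fin d) : Measurable fun x : Ed d => x i :=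
  (measurable_pi_apply i).comp (MeasurableEquiv.toLp 2 (Fin d → ℝ)).symm.measurable

lemma measurableSet_forall_mem {d : ℕ} (S : Fin d → Set ℝ) (hS : ∀ i, MeasurableSet (S i)) :
    MeasurableSet {x : Ed d | ∀ i, x i ∈ S i} := by
  have h : {x : Ed d | ∀ i, x i ∈ S i} = ⋂ i, (fun x : Ed d => x i) ⁻¹' S i := by
    ext x; simp
  rw [h]
  exact MeasurableSet.iInter fun i => (measurable_eval d i) (hS i)

lemma volume_forall_mem {d : ℕ} (S : Fin d → Set ℝ) (hS : ∀ i, MeasurableSet (S i)) :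
    volume {x : Ed d | ∀ i, x i ∈ S i} = ∏ i, volume (S i) := by
  have h1 : {x : Ed d | ∀ i, x i ∈ S i}
      = (MeasurableEquiv.toLp 2 (Fin d → ℝ)).symm ⁻¹' (Set.univ.pi S) := by
    ext x; simp [Set.mem_pi]
  rw [h1, (EuclideanSpace.volume_preserving_symm_measurableEquiv_toLp (Fin d)).measure_preimage
      (MeasurableSet.univ_pi hS).nullMeasurableSet, volume_pi_pi]

lemma volume_cell (d : ℕ) (j : Fin d → ℤ) : volume (cell d j) = 1 := by
  have : cell d j = {x : Ed d | ∀ i, x i ∈ Set.Icc (j i : ℝ) (j i + 1)} := rfl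
  rw [this, volume_forall_mem _ (fun i => measurableSet_Icc)]
  simp [Real.volume_Icc]

lemma volume_hyperplane (d : ℕ) (i : Fin d) (c : ℝ) : volume {x : Ed d | x i = c} = 0 := by
  have h : {x : Ed d | x i = c}
      = {x : Ed d | ∀ k, x k ∈ (fun k => if k = i then ({c} : Set ℝ) else Set.univ) k} := by
    ext x
    constructor
    · intro hx k
      by_cases hk : k = i <;> simp [hk, hx]
      exact hx ▸ (hk ▸ rfl)
    · intro hx
      have := hx i
      simpa using this
  rw [h, volume_forall_mem _ (fun k => by by_cases hk : k = i <;> simp [hk])]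
  refine Finset.prod_eq_zero (Finset.mem_univ i) ?_
  simp


def cellIco (d : ℕ) (ι : Fin d → ℤ) : Set (Ed d) :=
  {x | ∀ i, x i ∈ Set.Ico (2*π*(ι i)) (2*π*(ι i) + 2*π)}

lemma measurableSet_cell2pi (d : ℕ) (ι : Fin d → ℤ) : MeasurableSet (cell2pi d ι) :=
  measurableSet_forall_mem _ (fun _ => measurableSet_Icc)

lemma measurableSet_cellIco (d : ℕ) (ι : Fin d → ℤ) : MeasurableSet (cellIco d ι) :=
  measurableSet_forall_mem _ (fun _ => measurableSet_Ico)

lemma cellIco_disjoint (d : ℕ) : Pairwise (Function.onFun Disjoint (cellIco d)) := by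
  intro ι κ hne
  rw [Function.onFun, Set.disjoint_left]
  intro x hx hx'
  obtain ⟨i, hi⟩ := Function.ne_iff.mp hne
  have h1 := hx i
  have h2 := hx' i
  simp only [Set.mem_Ico] at h1 h2
  have hπ := Real.pi_pos
  rcases lt_or_gt_of_ne hi with h | h
  · have hc : (ι i : ℝ) + 1 ≤ (κ i : ℝ) := by exact_mod_cast h
    nlinarith [h1.2, h2.1]
  · have hc : (κ i : ℝ) + 1 ≤ (ι i : ℝ) := by exact_mod_cast h
    nlinarith [h2.2, h1.1]

lemma cell2pi_ae_eq (d : ℕ) (ι : Fin d → ℤ) : cell2pi d ι =ᵐ[volume] cellIco d ι := by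
  rw [MeasureTheory.ae_eq_set]
  constructor
  · refine measure_mono_null (t := ⋃ i, {x : Ed d | x i = 2*π*(ι i) + 2*π}) ?_ ?_
    · intro x hx
      obtain ⟨hx1, hx2⟩ := hx
      simp only [cellIco, Set.mem_setOf_eq, not_forall] at hx2
      obtain ⟨i, hi⟩ := hx2
      have h1 := hx1 i
      simp only [Set.mem_Icc] at h1
      simp only [Set.mem_Ico, not_and, not_lt] at hi
      exact Set.mem_iUnion.mpr ⟨i, le_antisymm h1.2 (hi h1.1)⟩
    · exact measure_iUnion_null fun i => volume_hyperplane d i _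
  · refine measure_mono_null (t := ∅) ?_ ?_
    · intro x hx
      exact absurd (fun i => Set.Ico_subset_Icc_self (hx.1 i)) hx.2
    · simp

lemma cell2pi_cover (d : ℕ) (x : Ed d) : ∃ ι : Fin d → ℤ, x ∈ cell2pi d ι := by
  have h2π : (0:ℝ) < 2*π := by positivity
  refine ⟨fun i => ⌊x i / (2*π)⌋, fun i => ?_⟩
  have hf := Int.floor_le (x i / (2*π))
  have hf2 := Int.lt_floor_add_one (x i / (2*π))
  rw [div_lt_iff₀ h2π] at hf2
  rw [le_div_iff₀ h2π] at hf
  constructor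
  · nlinarith
  · nlinarith


section helpers
variable {α : Type*} [MeasurableSpace α] {μ : Measure α}

lemma lpSeq_mono {ι : Type*} {p : ℝ≥0∞} {a b : ι → ℝ≥0∞} (h : ∀ i, a i ≤ b i) :
    lpSeq p a ≤ lpSeq p b := by
  unfold lpSeq
  split
  · exact iSup_mono h
  · exact ENNReal.rpow_le_rpow
      (ENNReal.tsum_le_tsum fun i => ENNReal.rpow_le_rpow (h i) ENNReal.toReal_nonneg)
      (by positivity)

lemma lpENN_mono_ae {p : ℝ≥0∞} {g h : α → ℝ≥0∞} (hgh : g ≤ᵐ[μ] h) :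
    lpENN p μ g ≤ lpENN p μ h := by
  unfold lpENN
  split
  · exact essSup_mono_ae hgh
  · refine ENNReal.rpow_le_rpow (lintegral_mono_ae ?_) (by positivity)
    filter_upwards [hgh] with x hx using ENNReal.rpow_le_rpow hx ENNReal.toReal_nonneg

lemma lpENN_le_of_ae_le {p : ℝ≥0∞} (hp : p ≠ 0) {g : α → ℝ≥0∞} {c : ℝ≥0∞}
    (hμ : μ Set.univ ≤ 1) (hgc : ∀ᵐ x ∂μ, g x ≤ c) : lpENN p μ g ≤ c := by
  unfold lpENN
  split
  case isTrue h => exact essSup_le_of_ae_le c hgc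
  case isFalse h =>
    have hpt : 0 < p.toReal := ENNReal.toReal_pos hp h
    calc (∫⁻ x, g x ^ p.toReal ∂μ) ^ (1/p.toReal)
        ≤ (∫⁻ _, c ^ p.toReal ∂μ) ^ (1/p.toReal) := by
          refine ENNReal.rpow_le_rpow (lintegral_mono_ae ?_) (by positivity)
          filter_upwards [hgc] with x hx using ENNReal.rpow_le_rpow hx hpt.le
      _ = (c ^ p.toReal * μ Set.univ) ^ (1/p.toReal) := by rw [lintegral_const]
      _ ≤ (c ^ p.toReal * 1) ^ (1/p.toReal) := by
          exact ENNReal.rpow_le_rpow (mul_le_mul_right hμ _) (by positivity)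
      _ = c := by
          rw [mul_one, one_div, ENNReal.rpow_rpow_inv hpt.ne']

lemma essSup_le_iSup_essSup_restrict {ι : Type*} [Countable ι] {g : α → ℝ≥0∞}
    {A : ι → Set α} (hA : ∀ i, MeasurableSet (A i)) (hcov : ∀ x, ∃ i, x ∈ A i) :
    essSup g μ ≤ ⨆ i, essSup g (μ.restrict (A i)) := by
  set C := ⨆ i, essSup g (μ.restrict (A i)) with hC
  refine essSup_le_of_ae_le C ?_
  have h1 : ∀ i, ∀ᵐ x ∂μ, x ∈ A i → g x ≤ C := by
    intro i
    refine (ae_restrict_iff' (hA i)).mp ?_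
    exact (ENNReal.ae_le_essSup (μ := μ.restrict (A i)) g).mono
      fun x hx => hx.trans (le_iSup (fun i => essSup g (μ.restrict (A i))) i)
  filter_upwards [ae_all_iff.mpr h1] with x hx
  obtain ⟨i, hi⟩ := hcov x
  exact hx i hi

lemma minkowski_tsum {ι : Type*} [Countable ι] {b : ι → α → ℝ≥0∞}
    (hb : ∀ i, AEMeasurable (b i) μ) {s : ℝ} (hs : 1 ≤ s) :
    (∑' i, (∫⁻ x, b i x ∂μ) ^ s) ^ (1/s) ≤ ∫⁻ x, (∑' i, b i x ^ s) ^ (1/s) ∂μ := by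
  have hs0 : 0 < s := lt_of_lt_of_le one_pos hs
  set R := ∫⁻ x, (∑' i, b i x ^ s) ^ (1/s) ∂μ with hR
  -- each single integral is at most R
  have hsingle : ∀ i, ∫⁻ x, b i x ∂μ ≤ R := by
    intro i
    refine lintegral_mono fun x => ?_
    calc b i x = (b i x ^ s) ^ (1/s) := by
          rw [one_div, ENNReal.rpow_rpow_inv hs0.ne']
      _ ≤ (∑' i, b i x ^ s) ^ (1/s) :=
          ENNReal.rpow_le_rpow (ENNReal.le_tsum i) (by positivity)
  -- finite version
  have hfin : ∀ T : Finset ι, (∑ i ∈ T, (∫⁻ x, b i x ∂μ) ^ s) ^ (1/s) ≤ R := by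
    intro T
    rcases eq_or_lt_of_le hs with rfl | hs1
    · -- s = 1
      simp only [ENNReal.rpow_one, one_div, inv_one]
      rw [← lintegral_finset_sum' T fun i _ => hb i]
      refine lintegral_mono fun x => ?_
      simpa using ENNReal.sum_le_tsum (f := fun i => b i x) T
    · have hsplit : ∀ x : ℝ≥0∞, x ^ s = x ^ (s-1) * x := by
        intro x
        have h : (s-1) + 1 = s := by ring
        calc x ^ s = x ^ ((s-1)+1) := by rw [h]
          _ = x ^ (s-1) * x ^ (1:ℝ) :=
              ENNReal.rpow_add_of_nonneg _ _ (by linarith) zero_le_one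
          _ = x ^ (s-1) * x := by rw [ENNReal.rpow_one]
      by_cases htop : ∃ i ∈ T, ∫⁻ x, b i x ∂μ = ∞
      · obtain ⟨i, hiT, hi⟩ := htop
        have : R = ∞ := top_le_iff.mp (hi ▸ hsingle i)
        simp [this]
      push_neg at htop
      set S : ι → ℝ≥0∞ := fun i => ∫⁻ x, b i x ∂μ with hS
      set N : ℝ≥0∞ := (∑ i ∈ T, S i ^ s) ^ (1/s) with hN
      rcases eq_or_ne N 0 with hN0 | hN0
      · simp [hN0]
      have hNtop : N ≠ ∞ := by
        rw [hN]
        refine (ENNReal.rpow_lt_top_of_nonneg (by positivity) ?_).ne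
        refine (ENNReal.sum_lt_top.mpr fun i hi => ?_).ne
        exact ENNReal.rpow_lt_top_of_nonneg hs0.le (htop i hi)
      suffices h : N ≤ R by exact h
      have hconj : s.HolderConjugate (Real.conjExponent s) :=
        Real.HolderConjugate.conjExponent hs1
      set s' := Real.conjExponent s with hs'
      -- N ^ s ≤ N ^ (s - 1) * R
      have hkey : N ^ s ≤ N ^ (s - 1) * R := by
        have hNs : N ^ s = ∑ i ∈ T, S i ^ s := by
          rw [hN, one_div, ENNReal.rpow_inv_rpow hs0.ne']
        have step1 : N ^ s = ∑ i ∈ T, S i ^ (s-1) * S i := by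
          rw [hNs]
          exact Finset.sum_congr rfl fun i _ => hsplit (S i)
        have step2 : ∑ i ∈ T, S i ^ (s-1) * S i = ∫⁻ x, ∑ i ∈ T, S i ^ (s-1) * b i x ∂μ := by
          rw [lintegral_finset_sum' T fun i _ => (hb i).const_mul _]
          refine Finset.sum_congr rfl fun i hi => ?_
          rw [lintegral_const_mul' _ _ (by
            exact ENNReal.rpow_ne_top_of_nonneg (by linarith) (htop i hi))]
        have step3 : ∀ x, ∑ i ∈ T, S i ^ (s-1) * b i x
            ≤ (∑ i ∈ T, (S i ^ (s-1)) ^ s') ^ (1/s') * (∑ i ∈ T, b i x ^ s) ^ (1/s) := by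
          intro x
          exact ENNReal.inner_le_Lp_mul_Lq T _ _ hconj.symm
        have hexp : ∀ i, (S i ^ (s-1)) ^ s' = S i ^ s := by
          intro i
          rw [← ENNReal.rpow_mul, hconj.sub_one_mul_conj]
        have hpull : (∑ i ∈ T, (S i ^ (s-1)) ^ s') ^ (1/s') = N ^ (s - 1) := by
          have : (∑ i ∈ T, (S i ^ (s-1)) ^ s') = N ^ s := by
            rw [hN, one_div, ENNReal.rpow_inv_rpow hs0.ne']
            exact Finset.sum_congr rfl fun i _ => hexp i
          rw [this, ← ENNReal.rpow_mul]
          congr 1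
          have h2 : (1:ℝ)/s' = 1 - 1/s := by
            have h3 := hconj.inv_add_inv_eq_one
            rw [one_div, one_div]
            linarith
          rw [h2, mul_sub, mul_one, mul_one_div, div_self hs0.ne']
        calc N ^ s = ∫⁻ x, ∑ i ∈ T, S i ^ (s-1) * b i x ∂μ := by rw [step1, step2]
          _ ≤ ∫⁻ x, (∑ i ∈ T, (S i ^ (s-1)) ^ s') ^ (1/s') * (∑ i ∈ T, b i x ^ s) ^ (1/s) ∂μ :=
              lintegral_mono fun x => step3 x
          _ = (∑ i ∈ T, (S i ^ (s-1)) ^ s') ^ (1/s') * ∫⁻ x, (∑ i ∈ T, b i x ^ s) ^ (1/s) ∂μ := by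
              rw [lintegral_const_mul' _ _ (by
                rw [hpull]; exact ENNReal.rpow_ne_top_of_nonneg (by linarith) hNtop)]
          _ ≤ N ^ (s-1) * R := by
              rw [hpull]
              refine mul_le_mul_right (lintegral_mono fun x => ?_) _
              exact ENNReal.rpow_le_rpow
                (ENNReal.sum_le_tsum T) (by positivity)
      -- cancel
      rw [hsplit N] at hkey
      exact (ENNReal.mul_le_mul_iff_right
        (by simp [ENNReal.rpow_eq_zero_iff, hN0, hNtop])
        (ENNReal.rpow_ne_top_of_nonneg (by linarith) hNtop)).mp hkey
  -- conclude
  rw [ENNReal.tsum_eq_iSup_sum]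
  have : ∀ T : Finset ι, ∑ i ∈ T, (∫⁻ x, b i x ∂μ) ^ s ≤ R ^ s := by
    intro T
    have := hfin T
    calc ∑ i ∈ T, (∫⁻ x, b i x ∂μ) ^ s
        = ((∑ i ∈ T, (∫⁻ x, b i x ∂μ) ^ s) ^ (1/s)) ^ s := by
          rw [one_div, ENNReal.rpow_inv_rpow hs0.ne']
      _ ≤ R ^ s := ENNReal.rpow_le_rpow this hs0.le
  calc (⨆ T : Finset ι, ∑ i ∈ T, (∫⁻ x, b i x ∂μ) ^ s) ^ (1/s)
      ≤ (R ^ s) ^ (1/s) := ENNReal.rpow_le_rpow (iSup_le this) (by positivity)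
    _ = R := by rw [one_div, ENNReal.rpow_rpow_inv hs0.ne']

end helpers


lemma Measurable.ennrpow_const {α : Type*} [MeasurableSpace α] {f : α → ℝ≥0∞}
    (hf : Measurable f) (y : ℝ) : Measurable fun x => f x ^ y :=
  ENNReal.continuous_rpow_const.measurable.comp hf

lemma measurable_a (d : ℕ) {q : ℝ≥0∞} (hq0 : q ≠ 0) (hqt : q ≠ ∞)
    {F : Ed d × Ed d → ℂ} (hF : Measurable F) (ι : Fin d → ℤ) :
    Measurable fun x : Ed d => eLpNorm (fun t => F (x, t)) q (volume.restrict (cell2pi d ι)) := by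
  simp_rw [eLpNorm_eq_lintegral_rpow_enorm_toReal hq0 hqt]
  refine (Measurable.lintegral_prod_right
    (f := fun x t => ((‖F (x, t)‖₊ : ℝ≥0∞)) ^ q.toReal) ?_).ennrpow_const _
  exact (hF.enorm.comp measurable_id).ennrpow_const _

lemma claimA (d : ℕ) {q : ℝ≥0∞} (hq0 : q ≠ 0) (hqt : q ≠ ∞) (F : Ed d × Ed d → ℂ) (x : Ed d) :
    ∑' ι : Fin d → ℤ,
        eLpNorm (fun t => F (x, t)) q (volume.restrict (cell2pi d ι)) ^ q.toReal
      ≤ eLpNorm (fun t => F (x, t)) q volume ^ q.toReal := by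
  have hqr : 0 < q.toReal := ENNReal.toReal_pos hq0 hqt
  have key : ∀ ι : Fin d → ℤ,
      eLpNorm (fun t => F (x, t)) q (volume.restrict (cell2pi d ι)) ^ q.toReal
        = ∫⁻ t in cellIco d ι, ((‖F (x, t)‖₊ : ℝ≥0∞)) ^ q.toReal := by
    intro ι
    rw [eLpNorm_eq_lintegral_rpow_enorm_toReal hq0 hqt, one_div, ENNReal.rpow_inv_rpow hqr.ne',
      Measure.restrict_congr_set (cell2pi_ae_eq d ι)]
    simp only [enorm_eq_nnnorm]
  simp_rw [key]
  rw [← lintegral_iUnion (measurableSet_cellIco d) (cellIco_disjoint d)]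
  rw [eLpNorm_eq_lintegral_rpow_enorm_toReal hq0 hqt, one_div, ENNReal.rpow_inv_rpow hqr.ne']
  exact lintegral_mono' Measure.restrict_le_self (le_refl _)

lemma claimB (d : ℕ) {q : ℝ≥0∞} (hq0 : q ≠ 0) (F : Ed d × Ed d → ℂ) (x : Ed d) :
    eLpNorm (fun t => F (x, t)) q volume
      ≤ lpSeq q (fun ι : Fin d → ℤ =>
          eLpNorm (fun t => F (x, t)) q (volume.restrict (cell2pi d ι))) := by
  by_cases hqt : q = ∞
  · subst hqt
    rw [lpSeq, if_pos rfl]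
    simp_rw [eLpNorm_exponent_top, eLpNormEssSup]
    exact essSup_le_iSup_essSup_restrict (measurableSet_cell2pi d) (cell2pi_cover d)
  · have hqr : 0 < q.toReal := ENNReal.toReal_pos hq0 hqt
    rw [lpSeq, if_neg hqt]
    have key : eLpNorm (fun t => F (x, t)) q volume ^ q.toReal
        ≤ ∑' ι : Fin d → ℤ,
            eLpNorm (fun t => F (x, t)) q (volume.restrict (cell2pi d ι)) ^ q.toReal := by
      have hu : (⋃ ι : Fin d → ℤ, cell2pi d ι) = Set.univ :=
        Set.iUnion_eq_univ_iff.mpr fun x => cell2pi_cover d x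
      calc eLpNorm (fun t => F (x, t)) q volume ^ q.toReal
          = ∫⁻ t, ((‖F (x, t)‖₊ : ℝ≥0∞)) ^ q.toReal := by
            rw [eLpNorm_eq_lintegral_rpow_enorm_toReal hq0 hqt, one_div,
              ENNReal.rpow_inv_rpow hqr.ne']
            simp only [enorm_eq_nnnorm]
        _ = ∫⁻ t in ⋃ ι : Fin d → ℤ, cell2pi d ι, ((‖F (x, t)‖₊ : ℝ≥0∞)) ^ q.toReal := by
            rw [hu, Measure.restrict_univ]
        _ ≤ ∑' ι : Fin d → ℤ, ∫⁻ t in cell2pi d ι, ((‖F (x, t)‖₊ : ℝ≥0∞)) ^ q.toReal :=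
            lintegral_iUnion_le _ _
        _ = ∑' ι : Fin d → ℤ,
              eLpNorm (fun t => F (x, t)) q (volume.restrict (cell2pi d ι)) ^ q.toReal := by
            refine tsum_congr fun ι => ?_
            rw [eLpNorm_eq_lintegral_rpow_enorm_toReal hq0 hqt, one_div,
              ENNReal.rpow_inv_rpow hqr.ne']
            simp only [enorm_eq_nnnorm]
    calc eLpNorm (fun t => F (x, t)) q volume
        = (eLpNorm (fun t => F (x, t)) q volume ^ q.toReal) ^ (1 / q.toReal) := by
          rw [one_div, ENNReal.rpow_rpow_inv hqr.ne']
      _ ≤ (∑' ι : Fin d → ℤ,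
            eLpNorm (fun t => F (x, t)) q (volume.restrict (cell2pi d ι)) ^ q.toReal)
              ^ (1 / q.toReal) := ENNReal.rpow_le_rpow key (by positivity)

lemma part1 (d : ℕ) {q r₂ : ℝ≥0∞} (hq : 0 < q) (hr₂ : 0 < r₂) (hr₂q : r₂ ≤ q)
    {F : Ed d × Ed d → ℂ} (hF : Measurable F) (j : Fin d → ℤ) :
    lpSeq q (fun ι : Fin d → ℤ => Hq d q r₂ F j ι)
      ≤ lpENN r₂ (volume.restrict (cell d j))
          (fun x => eLpNorm (fun t => F (x, t)) q volume) := by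
  set μ := volume.restrict (cell d j) with hμ
  by_cases hqt : q = ∞
  · subst hqt
    rw [lpSeq, if_pos rfl]
    refine iSup_le fun ι => ?_
    exact lpENN_mono_ae (Filter.Eventually.of_forall fun x =>
      eLpNorm_mono_measure _ Measure.restrict_le_self)
  · have hr₂t : r₂ ≠ ∞ := fun h => hqt (top_le_iff.mp (h ▸ hr₂q))
    have hqr : 0 < q.toReal := ENNReal.toReal_pos hq.ne' hqt
    have hrr : 0 < r₂.toReal := ENNReal.toReal_pos hr₂.ne' hr₂t
    have hle : r₂.toReal ≤ q.toReal := ENNReal.toReal_mono hqt hr₂q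
    set qr := q.toReal with hqr_def
    set rr := r₂.toReal with hrr_def
    set s := qr / rr with hs_def
    have hs1 : 1 ≤ s := (one_le_div hrr).mpr hle
    have hs0 : 0 < s := lt_of_lt_of_le one_pos hs1
    set a : (Fin d → ℤ) → Ed d → ℝ≥0∞ := fun ι x =>
      eLpNorm (fun t => F (x, t)) q (volume.restrict (cell2pi d ι)) with ha
    set b : (Fin d → ℤ) → Ed d → ℝ≥0∞ := fun ι x => a ι x ^ rr with hb
    have hbmeas : ∀ ι, AEMeasurable (b ι) μ := fun ι =>
      ((measurable_a d hq.ne' hqt hF ι).ennrpow_const rr).aemeasurable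
    have hL : lpSeq q (fun ι : Fin d → ℤ => Hq d q r₂ F j ι)
        = ((∑' ι : Fin d → ℤ, (∫⁻ x, b ι x ∂μ) ^ s) ^ (1/s)) ^ (1/rr) := by
      rw [lpSeq, if_neg hqt]
      have h1 : ∀ ι : Fin d → ℤ, Hq d q r₂ F j ι ^ qr = (∫⁻ x, b ι x ∂μ) ^ s := by
        intro ι
        rw [Hq, lpENN, if_neg hr₂t, ← ENNReal.rpow_mul]
        congr 1
        rw [hs_def]
        field_simp
        exact div_self hrr.ne'
      simp_rw [← hqr_def, h1]
      rw [← ENNReal.rpow_mul]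
      congr 1
      rw [hs_def]
      field_simp
    have hR : lpENN r₂ μ (fun x => eLpNorm (fun t => F (x, t)) q volume)
        = (∫⁻ x, eLpNorm (fun t => F (x, t)) q volume ^ rr ∂μ) ^ (1/rr) := by
      rw [lpENN, if_neg hr₂t]
    rw [hL, hR]
    refine ENNReal.rpow_le_rpow ?_ (by positivity)
    calc (∑' ι : Fin d → ℤ, (∫⁻ x, b ι x ∂μ) ^ s) ^ (1/s)
        ≤ ∫⁻ x, (∑' ι : Fin d → ℤ, b ι x ^ s) ^ (1/s) ∂μ := minkowski_tsum hbmeas hs1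
      _ ≤ ∫⁻ x, eLpNorm (fun t => F (x, t)) q volume ^ rr ∂μ := by
          refine lintegral_mono fun x => ?_
          have e1 : ∀ ι : Fin d → ℤ, b ι x ^ s = a ι x ^ qr := by
            intro ι
            rw [hb]
            rw [← ENNReal.rpow_mul]
            congr 1
            rw [hs_def, mul_comm, div_mul_cancel₀ _ hrr.ne']
          simp_rw [e1]
          calc (∑' ι : Fin d → ℤ, a ι x ^ qr) ^ (1/s)
              ≤ (eLpNorm (fun t => F (x, t)) q volume ^ qr) ^ (1/s) :=
                ENNReal.rpow_le_rpow (claimA d hq.ne' hqt F x) (by positivity)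
            _ = eLpNorm (fun t => F (x, t)) q volume ^ rr := by
                rw [← ENNReal.rpow_mul]
                congr 1
                rw [hs_def, one_div_div, mul_comm, div_mul_cancel₀ _ hqr.ne']

lemma part2 (d : ℕ) {q r₂ : ℝ≥0∞} (hq0 : q ≠ 0) (hr₂0 : r₂ ≠ 0)
    (F : Ed d × Ed d → ℂ) (j : Fin d → ℤ) :
    lpENN r₂ (volume.restrict (cell d j))
        (fun x => eLpNorm (fun t => F (x, t)) q volume)
      ≤ lpSeq q (fun ι : Fin d → ℤ => Hq d q ∞ F j ι) := by
  set μ := volume.restrict (cell d j) with hμ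
  have hμ1 : μ Set.univ ≤ 1 := by
    rw [hμ, Measure.restrict_apply_univ, volume_cell]
  refine lpENN_le_of_ae_le hr₂0 hμ1 ?_
  have hae : ∀ᵐ x ∂μ, ∀ ι : Fin d → ℤ,
      eLpNorm (fun t => F (x, t)) q (volume.restrict (cell2pi d ι))
        ≤ essSup (fun y => eLpNorm (fun t => F (y, t)) q (volume.restrict (cell2pi d ι))) μ :=
    ae_all_iff.mpr fun ι => ENNReal.ae_le_essSup _
  filter_upwards [hae] with x hx
  calc eLpNorm (fun t => F (x, t)) q volume
      ≤ lpSeq q (fun ι : Fin d → ℤ =>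
          eLpNorm (fun t => F (x, t)) q (volume.restrict (cell2pi d ι))) := claimB d hq0 F x
    _ ≤ lpSeq q (fun ι : Fin d → ℤ => Hq d q ∞ F j ι) := by
        refine lpSeq_mono fun ι => ?_
        rw [Hq, lpENN, if_pos rfl]
        exact hx ι


/-- comparison of Wiener amalgam quasi-norms `𝖶^∞(ℓ^{q,p})`,
`𝖶^{r₂}_2(ℓ^p, L^q)` and `𝖶^{r₂}(ℓ^{q,p})` on the lattice `ℤ^d × 2πℤ^d`. -/
theorem stmt12 (d : ℕ) (hd : 1 ≤ d) (p q r₂ : ℝ≥0∞)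
    (hp : 0 < p) (hq : 0 < q) (hr₂ : 0 < r₂) (hr₂q : r₂ ≤ q) :
    ∃ C₁ C₂ : ℝ, 0 < C₁ ∧ 0 < C₂ ∧
      ∀ F : Ed d × Ed d → ℂ, Measurable F →
        lpSeq p (fun j : Fin d → ℤ => lpSeq q (fun ι : Fin d → ℤ => Hq d q r₂ F j ι))
          ≤ ENNReal.ofReal C₁ *
            lpSeq p (fun j : Fin d → ℤ =>
              lpENN r₂ (volume.restrict (cell d j))
                (fun x => eLpNorm (fun t => F (x, t)) q volume)) ∧
        lpSeq p (fun j : Fin d → ℤ =>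
            lpENN r₂ (volume.restrict (cell d j))
              (fun x => eLpNorm (fun t => F (x, t)) q volume))
          ≤ ENNReal.ofReal C₂ *
            lpSeq p (fun j : Fin d → ℤ => lpSeq q (fun ι : Fin d → ℤ => Hq d q ∞ F j ι)) := by
  refine ⟨1, 1, one_pos, one_pos, fun F hF => ?_⟩
  constructor
  · rw [ENNReal.ofReal_one, one_mul]
    exact lpSeq_mono fun j => part1 d hq hr₂ hr₂q hF j
  · rw [ENNReal.ofReal_one, one_mul]
    exact lpSeq_mono fun j => part2 d hq.ne' hr₂.ne' F j

end
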